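/- Let q be a prime power with gcd(q,3)=1, and let α > β be positive integers. If gcd(3, q+1)=1, then the polynomial X^α + X^β + 1 has no roots in μ_{q+1}, the group of (q+1)-th roots of unity in F_{q^2}^*. -/
import Mathlib


/-- If `q` is a prime power coprime to 3 and `α > β > 0`, then under the stated
gcd condition the polynomial `X^α + X^β + 1` has no roots in `μ_{q+1} ⊆ F_{q^2}^*`. -/
theorem stmt_1 (q α β : ℕ) (hq3 : Nat.Coprime q 3)
    (p n : ℕ) (hp : p.Prime) (hn : 0 < n) (hqpn : q = p ^ n)
    (hβ : 0 < β) (hαβ : β < α)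
    (hgcd : Nat.gcd 3 (q + 1) = 1)
    (F : Type*) [Field F] [Fintype F] (hF : Fintype.card F = q ^ 2)
    (a : F) (ha : a ≠ 0) (hμ : a ^ (q + 1) = 1) :
    a ^ α + a ^ β + 1 ≠ 0 := by
  haveI := Fact.mk hp
  -- characteristic of F is p
  have hr : CharP F (ringChar F) := ringChar.charP F
  have hrp : (ringChar F).Prime := CharP.char_is_prime F _
  obtain ⟨m, _, hcard⟩ := FiniteField.card F (ringChar F)
  have hq0 : q ≠ 0 := by rw [hqpn]; exact pow_ne_zero _ hp.pos.ne'
  have hcharp : ringChar F = p := by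
    have hc : Fintype.card F = p ^ (2 * n) := by
      rw [hF, hqpn, ← pow_mul, mul_comm]
    rw [hc] at hcard
    have hdvd : ringChar F ∣ p ^ (2 * n) := by
      rw [hcard]; exact dvd_pow_self _ m.pos.ne'
    exact (Nat.prime_dvd_prime_iff_eq hrp hp).mp (hrp.dvd_of_dvd_pow hdvd)
  haveI : CharP F p := hcharp ▸ hr
  have hp3 : p ≠ 3 := by
    rintro rfl
    have hdq : (3 : ℕ) ∣ q := hqpn ▸ dvd_pow_self 3 hn.ne'
    have := Nat.Coprime.eq_one_of_dvd hq3.symm hdq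
    norm_num at this
  have h3 : (3 : F) ≠ 0 := by
    intro h
    have h3' : (p : ℕ) ∣ 3 := (CharP.cast_eq_zero_iff F p 3).mp (by exact_mod_cast h)
    exact hp3 ((Nat.prime_dvd_prime_iff_eq hp (by norm_num)).mp h3')
  intro h
  -- Frobenius: raise to the q-th power
  have hq : a ^ q * a = 1 := by rw [← pow_succ]; exact hμ
  have hfrob : (a ^ α + a ^ β + 1) ^ q = (a ^ α) ^ q + (a ^ β) ^ q + 1 := by
    subst hqpn
    rw [add_pow_char_pow, add_pow_char_pow, one_pow]
  have h2 : (a ^ q) ^ α + (a ^ q) ^ β + 1 = 0 := by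
    rw [← pow_mul', ← pow_mul', pow_mul, pow_mul, ← hfrob, h, zero_pow hq0]
  have haq : a ^ q = a⁻¹ := by
    field_simp
    linear_combination hq
  rw [haq, inv_pow, inv_pow] at h2
  have hsplit : a ^ α = a ^ β * a ^ (α - β) := by
    rw [← pow_add]; congr 1; omega
  have e1 : (a ^ α)⁻¹ * a ^ α = 1 := inv_mul_cancel₀ (pow_ne_zero _ ha)
  have e2 : (a ^ β)⁻¹ * a ^ α = a ^ (α - β) := by
    rw [hsplit, ← mul_assoc, inv_mul_cancel₀ (pow_ne_zero _ ha), one_mul]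
  have h3' : 1 + a ^ (α - β) + a ^ α = 0 := by
    have hmul := congrArg (· * a ^ α) h2
    simpa [add_mul, e1, e2] using hmul
  have hkey : a ^ β = a ^ (α - β) := by linear_combination h - h3'
  have hα2β : a ^ α = (a ^ β) ^ 2 := by rw [hsplit, ← hkey, sq]
  set t := a ^ β with ht
  have hquad : t ^ 2 + t + 1 = 0 := by linear_combination h - hα2β
  have ht3 : t ^ 3 = 1 := by linear_combination (t - 1) * hquad
  have htq : t ^ (q + 1) = 1 := by
    rw [ht, ← pow_mul, mul_comm, pow_mul, hμ, one_pow]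
  have ht1 : t = 1 := by
    have d1 : orderOf t ∣ 3 := orderOf_dvd_of_pow_eq_one ht3
    have d2 : orderOf t ∣ q + 1 := orderOf_dvd_of_pow_eq_one htq
    have : orderOf t ∣ 1 := hgcd ▸ Nat.dvd_gcd d1 d2
    exact orderOf_eq_one_iff.mp (Nat.dvd_one.mp this)
  rw [ht1] at hquad
  apply h3
  linear_combination hquad
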